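/- arXiv:1511.02913 — 4 statements merged into one kernel-verified Lean document; each statement's English description precedes it below -/
import Mathlib

section
/- Let T be a depth-first search tree of a directed graph G, and let pre(v) denote the preorder number of vertex v in T. If v and w are vertices with pre(v) < pre(w), then every directed path from v to w in G contains a common ancestor of v and w in T. -/
namespace StrongConn

variable {V : Type*}

/-- `p` is a walk in the digraph `G` from `u` to `v`, recorded as the list of visited vertices. -/
def IsWalk (G : V → V → Prop) (u v : V) (p : List V) : Prop :=
  p.Chain' G ∧ p.head? = some u ∧ p.getLast? = some v

/-- The directed edge `(a,b)` occurs on the walk `p`. -/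
def EdgeOn (a b : V) (p : List V) : Prop := (a, b) ∈ p.zip p.tail

/-- `v` is reachable from `u` in `G`. -/
def Reach (G : V → V → Prop) (u v : V) : Prop := ∃ p, IsWalk G u v p

/-- `u` and `v` are strongly connected in `G`. -/
def SConn (G : V → V → Prop) (u v : V) : Prop := Reach G u v ∧ Reach G v u

def StronglyConnected (G : V → V → Prop) : Prop := ∀ u v, Reach G u v

/-- `G` with the edge `(a,b)` deleted. -/
def DelEdge (G : V → V → Prop) (a b : V) : V → V → Prop :=
  fun x y => G x y ∧ ¬(x = a ∧ y = b)

/-- `G` with the vertex `u` (and all incident edges) deleted. -/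
def DelVertex (G : V → V → Prop) (u : V) : V → V → Prop :=
  fun x y => G x y ∧ x ≠ u ∧ y ≠ u

/-- `C` is a strongly connected component of `G`. -/
def IsSCC (G : V → V → Prop) (C : Set V) : Prop :=
  C.Nonempty ∧ (∀ x ∈ C, ∀ y ∈ C, SConn G x y) ∧ ∀ x ∈ C, ∀ y, SConn G x y → y ∈ C

/-- `(a,b)` is a strong bridge: an edge whose removal increases the number of
strongly connected components, i.e. it separates some strongly connected pair. -/
def IsStrongBridge (G : V → V → Prop) (a b : V) : Prop :=
  G a b ∧ ∃ x y, SConn G x y ∧ ¬ SConn (DelEdge G a b) x y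

/-- `u` is a strong articulation point: removing it increases the number of strongly
connected components, i.e. it separates some strongly connected pair of other vertices. -/
def IsStrongArticulationPoint (G : V → V → Prop) (u : V) : Prop :=
  ∃ x y, x ≠ u ∧ y ≠ u ∧ SConn G x y ∧ ¬ SConn (DelVertex G u) x y

/-- The reverse digraph. -/
def Rev (G : V → V → Prop) : V → V → Prop := fun x y => G y x

/-- `u` dominates `v` in the flow graph `G_s`; equivalently, `u` is an ancestor of `v`
(and `v` a descendant of `u`) in the dominator tree of `G_s`. -/
def Dom (G : V → V → Prop) (s u v : V) : Prop :=
  ∀ p, IsWalk G s v p → u ∈ p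

/-- `u` is the immediate dominator of `v` in `G_s` (the parent of `v` in the dominator tree). -/
def Idom (G : V → V → Prop) (s u v : V) : Prop :=
  u ≠ v ∧ Dom G s u v ∧ ∀ w, w ≠ v → Dom G s w v → Dom G s w u

/-- Edge `(a,b)` is a bridge of the flow graph `G_s`: every walk from `s` to `b` uses it. -/
def IsBridge (G : V → V → Prop) (s a b : V) : Prop :=
  G a b ∧ ∀ p, IsWalk G s b p → EdgeOn a b p

/-- `r` is the head of some bridge of `G_s`, i.e. a non-`s` root in the bridge
decomposition of the dominator tree. -/
def IsBridgeHead (G : V → V → Prop) (s r : V) : Prop :=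
  ∃ a, IsBridge G s a r

/-- `r` is the root of the tree containing `x` in the bridge decomposition of the
dominator tree of `G_s`: `r` dominates `x`, `r` is `s` or a bridge head, and every
bridge head dominating `x` dominates `r`. -/
def IsBDRoot (G : V → V → Prop) (s r x : V) : Prop :=
  Dom G s r x ∧ (r = s ∨ IsBridgeHead G s r) ∧
    ∀ z, Dom G s z x → IsBridgeHead G s z → Dom G s z r

/-- A depth-first search tree of `G` rooted at `s`, given by a parent function and a
preorder numbering. -/
structure DFSTree (G : V → V → Prop) (s : V) where
  parent : V → V
  pre : V → ℕ
  parent_root : parent s = s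
  parent_edge : ∀ v, v ≠ s → G (parent v) v
  root_reach : ∀ v, ∃ n, parent^[n] v = s
  pre_inj : Function.Injective pre
  pre_parent : ∀ v, v ≠ s → pre (parent v) < pre v
  /-- Descendants of a vertex form a contiguous interval in preorder. -/
  interval : ∀ u v w, (∃ n, parent^[n] w = u) → pre u ≤ pre v → pre v ≤ pre w →
      ∃ n, parent^[n] v = u
  /-- The defining property of depth-first search trees: every edge going forward
  in preorder goes to a descendant. -/
  dfs_edge : ∀ u v, G u v → pre u < pre v → ∃ n, parent^[n] v = u

/-- `u` is an ancestor of `v` in the tree `T` (every vertex is an ancestor of itself). -/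
def DFSTree.Anc {G : V → V → Prop} {s : V} (T : DFSTree G s) (u v : V) : Prop :=
  ∃ n, T.parent^[n] v = u

/-- `x ∈ loop(u)` with respect to the tree-ancestor relation `tanc`: `x` is a descendant
of `u` and there is a walk from `x` to `u` using only descendants of `u`. -/
def InLoop (G : V → V → Prop) (tanc : V → V → Prop) (u x : V) : Prop :=
  tanc u x ∧ ∃ p, IsWalk G x u p ∧ ∀ y ∈ p, tanc u y

/-- `hp` is the parent function of the loop nesting tree of `G_s` with respect to the
DFS-tree ancestor relation `tanc`: `hp x` is the nearest proper ancestor `u` of `x`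
in the DFS tree with `x ∈ loop(u)`. -/
def IsLoopParent (G : V → V → Prop) (s : V) (tanc : V → V → Prop) (hp : V → V) : Prop :=
  hp s = s ∧ ∀ x, x ≠ s →
    (tanc (hp x) x ∧ hp x ≠ x ∧ InLoop G tanc (hp x) x ∧
      ∀ u, tanc u x → u ≠ x → InLoop G tanc u x → tanc u (hp x))

/-- `u` is an ancestor of `v` in the loop nesting tree with parent function `hp`. -/
def HAnc (hp : V → V) (u v : V) : Prop := ∃ n, hp^[n] v = u

/-- `w` is the nearest common ancestor of `x` and `y` in the loop nesting tree
with parent function `hp`. -/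
def HNca (hp : V → V) (x y w : V) : Prop :=
  HAnc hp w x ∧ HAnc hp w y ∧ ∀ z, HAnc hp z x → HAnc hp z y → HAnc hp z w

/-- `u` is a nontrivial dominator of `G_s`: `u ≠ s` and `u` is not a leaf of the
dominator tree (it properly dominates some vertex). -/
def NontrivialDom (G : V → V → Prop) (s u : V) : Prop :=
  u ≠ s ∧ ∃ w, w ≠ u ∧ Dom G s u w

/-- `a` and `b` are siblings in the dominator tree of `G_s`. -/
def SiblingInD (G : V → V → Prop) (s a b : V) : Prop :=
  a ≠ b ∧ ∃ w, Idom G s w a ∧ Idom G s w b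

/-- Given the bridge-decomposition root function `r` and loop-nesting parent `hp`,
`z` is a boundary vertex. -/
def Boundary (s : V) (r hp : V → V) (z : V) : Prop := z = s ∨ r (hp z) ≠ r z

/-- `z` is the nearest boundary ancestor of `x` in the loop nesting tree. -/
def IsNearestBoundary (s : V) (r hp : V → V) (x z : V) : Prop :=
  HAnc hp z x ∧ Boundary s r hp z ∧
    ∀ z', HAnc hp z' x → Boundary s r hp z' → HAnc hp z' z

/-- `x` and `y` are 2-edge-connected: no single edge deletion leaves them in
different strongly connected components. -/
def TwoEdgeConnected (G : V → V → Prop) (x y : V) : Prop :=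
  ∀ a b, G a b → SConn (DelEdge G a b) x y


theorem DFSTree.Anc.trans {G : V → V → Prop} {s : V} (T : DFSTree G s) {a b c : V}
    (h1 : T.Anc a b) (h2 : T.Anc b c) : T.Anc a c := by
  obtain ⟨n, hn⟩ := h1
  obtain ⟨m, hm⟩ := h2
  exact ⟨n + m, by rw [Function.iterate_add_apply, hm, hn]⟩

theorem anc_of_chain {G : V → V → Prop} {s : V} (T : DFSTree G s) {z : V}
    (q : List V) (hq : q.Chain' G) (hmin : ∀ y ∈ q, T.pre z ≤ T.pre y) :
    ∀ x, q.head? = some x → T.Anc z x → ∀ y ∈ q, T.Anc z y := by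
  induction q with
  | nil => intro x hx _ y hy; simp at hy
  | cons a rest ih =>
    intro x hx hzx y hy
    simp only [List.head?_cons, Option.some.injEq] at hx
    subst hx
    rcases List.mem_cons.1 hy with rfl | hy
    · exact hzx
    · cases rest with
      | nil => simp at hy
      | cons b rest' =>
        have hab : G a b := (List.isChain_cons_cons.1 hq).1
        have hrest : (b :: rest').Chain' G := (List.isChain_cons_cons.1 hq).2
        have hmin' : ∀ y ∈ b :: rest', T.pre z ≤ T.pre y := fun y hy =>
          hmin y (List.mem_cons_of_mem _ hy)
        have hzb : T.Anc z b := by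
          rcases lt_or_ge (T.pre a) (T.pre b) with h | h
          · exact hzx.trans T (T.dfs_edge a b hab h)
          · obtain ⟨n, hn⟩ := hzx
            exact T.interval z b a ⟨n, hn⟩ (hmin b (by simp)) h
        exact ih hrest hmin' b rfl hzb y hy

/-- Path Lemma: if `pre v < pre w` in a DFS tree `T` of `G`, then every walk from `v`
to `w` in `G` contains a common ancestor of `v` and `w` in `T`. -/
theorem stmt0 (G : V → V → Prop) (s : V) (T : DFSTree G s)
    (v w : V) (hvw : T.pre v < T.pre w)
    (p : List V) (hwalk : IsWalk G v w p) :
    ∃ a ∈ p, T.Anc a v ∧ T.Anc a w := by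
  obtain ⟨hchain, hhead, hlast⟩ := hwalk
  -- p is nonempty
  have hpne : p ≠ [] := by rintro rfl; simp at hhead
  -- pick z ∈ p minimizing T.pre
  obtain ⟨z, hz⟩ : ∃ z, z ∈ p.argmin T.pre := by
    cases h : p.argmin T.pre with
    | none => exact absurd (List.argmin_eq_none.1 h) hpne
    | some z => exact ⟨z, by simp [Option.mem_def, h]⟩
  have hzp : z ∈ p := List.argmin_mem hz
  have hmin : ∀ y ∈ p, T.pre z ≤ T.pre y := fun y hy =>
    le_of_not_gt (List.not_lt_of_mem_argmin hy hz)
  -- split p at z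
  obtain ⟨p1, p2, rfl⟩ := List.append_of_mem hzp
  have hvp : v ∈ p1 ++ z :: p2 := by
    exact List.mem_of_mem_head? (Option.mem_def.2 hhead)
  -- the suffix z :: p2 is a chain
  have hsuf : (z :: p2).Chain' G := hchain.suffix ⟨p1, rfl⟩
  have hminsuf : ∀ y ∈ z :: p2, T.pre z ≤ T.pre y := fun y hy =>
    hmin y (by simp [hy])
  have hancsuf : ∀ y ∈ z :: p2, T.Anc z y :=
    anc_of_chain T _ hsuf hminsuf z rfl ⟨0, rfl⟩
  -- w is the last element, which lies in z :: p2
  have hwlast : (z :: p2).getLast? = some w := by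
    rw [← List.getLast?_append_of_ne_nil p1 (l₂ := z :: p2) (by simp)]
    exact hlast
  have hwmem : w ∈ z :: p2 := by
    exact List.mem_of_mem_getLast? (Option.mem_def.2 hwlast)
  have hzw : T.Anc z w := hancsuf w hwmem
  have hzv : T.Anc z v := by
    obtain ⟨n, hn⟩ := hzw
    exact T.interval z v w ⟨n, hn⟩ (hmin v hvp) (le_of_lt hvw)
  exact ⟨z, hzp, hzv, hzw⟩

end StrongConn
end

section
/- Let G be a strongly connected digraph with start vertex s, and let e=(u,v) be an edge that is a bridge of the flow graph G_s (i.e., every path from s to v contains e). Then for every vertex w that is not a descendant of v in the dominator tree D of G_s, every simple path in G from w to any descendant of v in D must contain the edge (u,v). -/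
namespace StrongConn

variable {V : Type*}

lemma edgeOn_iff (a b : V) : ∀ (p : List V), EdgeOn a b p ↔ ∃ l1 l2, p = l1 ++ a :: b :: l2
  | [] => by
      constructor
      · intro h; simp [EdgeOn] at h
      · rintro ⟨l1, l2, h⟩; exact absurd h (by simp)
  | [x] => by
      constructor
      · intro h; simp [EdgeOn] at h
      · rintro ⟨l1, l2, h⟩
        apply_fun List.length at h
        simp at h; omega
  | x :: y :: t => by
      have ih := edgeOn_iff a b (y :: t)
      have step : EdgeOn a b (x :: y :: t) ↔ ((a, b) = (x, y) ∨ EdgeOn a b (y :: t)) := by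
        simp [EdgeOn]
      rw [step, ih]
      constructor
      · rintro (h | ⟨l1, l2, h⟩)
        · rw [Prod.mk.injEq] at h
          obtain ⟨rfl, rfl⟩ := h
          exact ⟨[], t, rfl⟩
        · exact ⟨x :: l1, l2, by rw [List.cons_append, ← h]⟩
      · rintro ⟨l1, l2, h⟩
        cases l1 with
        | nil =>
            simp at h
            obtain ⟨rfl, rfl, rfl⟩ := h
            exact Or.inl rfl
        | cons c l1' =>
            simp at h
            exact Or.inr ⟨l1', l2, h.2⟩

lemma IsWalk.trans {G : V → V → Prop} {a b c : V} {q r : List V}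
    (h1 : IsWalk G a b q) (h2 : IsWalk G b c r) : IsWalk G a c (q ++ r.tail) := by
  obtain ⟨hc1, hh1, hl1⟩ := h1
  obtain ⟨hc2, hh2, hl2⟩ := h2
  have hqne : q ≠ [] := by intro h; subst h; simp at hh1
  cases r with
  | nil => simp at hh2
  | cons x r' =>
    have hxb : x = b := by simpa using hh2
    have hj : ∀ y ∈ r'.head?, G b y := by
      have := (List.isChain_cons.mp hc2).1
      rwa [hxb] at this
    refine ⟨?_, ?_, ?_⟩
    · refine hc1.append hc2.tail ?_
      intro x' hx' y hy
      have hx'b : x' = b := by rw [hl1] at hx'; simpa using hx'.symm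
      exact hx'b ▸ hj y hy
    · rw [List.head?_append_of_ne_nil _ hqne]; exact hh1
    · cases r' with
      | nil =>
          have hbc : b = c := by rw [← hxb]; simpa using hl2
          simp only [List.tail, List.append_nil]
          rw [hl1, hbc]
      | cons y r'' =>
          show (q ++ (y :: r'')).getLast? = some c
          rw [List.getLast?_append_of_ne_nil _ (by simp)]
          simpa using hl2

theorem stmt1' (G : V → V → Prop) (s u v : V)
    (hbr : IsBridge G s u v)
    (w : V) (hw : ¬ Dom G s v w)
    (z : V) (hz : Dom G s v z)
    (p : List V) (hwalk : IsWalk G w z p) (hsimple : p.Nodup) :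
    EdgeOn u v p := by
  -- q : walk from s to w avoiding v
  rw [Dom] at hw
  push_neg at hw
  obtain ⟨q, hq, hvq⟩ := hw
  have hqlast : q.getLast? = some w := hq.2.2
  have hwv : w ≠ v := by
    rintro rfl
    exact hvq (List.mem_of_mem_getLast? (hqlast ▸ rfl))
  obtain ⟨hpchain, hphead, hplast⟩ := hwalk
  obtain ⟨p', rfl⟩ : ∃ p', p = w :: p' := by
    cases p with
    | nil => simp at hphead
    | cons x t => exact ⟨t, by simpa using (by simpa using hphead : x = w) ▸ rfl⟩
  -- concatenated walk s → z contains v, hence v ∈ p'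
  have hcwalk : IsWalk G s z (q ++ p') := hq.trans ⟨hpchain, hphead, hplast⟩
  have hvp' : v ∈ p' := by
    rcases List.mem_append.mp (hz _ hcwalk) with h | h
    · exact absurd h hvq
    · exact h
  obtain ⟨l1, l2, rfl⟩ := List.append_of_mem hvp'
  have hvl1 : v ∉ l1 := by
    have h2 := hsimple.of_cons
    rw [List.nodup_append] at h2
    intro hv
    exact h2.2.2 v hv v (by simp) rfl
  -- the walk w → v along the prefix
  have hprefwalk : IsWalk G w v (w :: (l1 ++ [v])) := by
    refine ⟨?_, by simp, ?_⟩
    · exact hpchain.prefix ⟨l2, by simp⟩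
    · show ((w :: l1) ++ [v]).getLast? = some v
      rw [List.getLast?_append_of_ne_nil _ (by simp)]
      simp
  -- the walk s → v
  have hc'walk : IsWalk G s v (q ++ (l1 ++ [v])) := by
    have := hq.trans hprefwalk
    simpa using this
  have hedge := hbr.2 _ hc'walk
  rw [edgeOn_iff] at hedge
  obtain ⟨m1, m2, hm⟩ := hedge
  have hvql1 : v ∉ q ++ l1 := by simp [hvq, hvl1]
  have hm2 : m2 = [] := by
    rcases List.eq_nil_or_concat m2 with h | ⟨m2', x, rfl⟩
    · exact h
    · exfalso
      have heq : (q ++ l1) ++ [v] = (m1 ++ u :: v :: m2') ++ [x] := by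
        simpa only [List.concat_eq_append, List.append_assoc, List.cons_append, List.nil_append] using hm
      obtain ⟨h1, _⟩ := List.append_inj' heq (by simp)
      exact hvql1 (by rw [h1]; simp)
  subst hm2
  have hqm : q ++ l1 = m1 ++ [u] := by
    have heq : (q ++ l1) ++ [v] = (m1 ++ [u]) ++ [v] := by
      simpa only [List.append_assoc, List.cons_append, List.nil_append] using hm
    exact (List.append_inj' heq rfl).1
  have hlast1 : (q ++ l1).getLast? = (w :: l1).getLast? := by
    cases l1 with
    | nil => simpa using hqlast
    | cons a t =>
        rw [List.getLast?_append_of_ne_nil _ (by simp)]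
        simp
  have hlu : (w :: l1).getLast? = some u := by
    rw [← hlast1, hqm, List.getLast?_append_of_ne_nil _ (by simp)]
    simp
  have hsplit : (w :: l1).dropLast ++ [u] = w :: l1 :=
    List.dropLast_append_getLast? u hlu
  rw [edgeOn_iff]
  refine ⟨(w :: l1).dropLast, l2, ?_⟩
  calc w :: (l1 ++ v :: l2) = (w :: l1) ++ v :: l2 := by simp
    _ = ((w :: l1).dropLast ++ [u]) ++ v :: l2 := by rw [hsplit]
    _ = (w :: l1).dropLast ++ u :: v :: l2 := by simp

/-- If `(u,v)` is a bridge of `G_s` and `w` is not a descendant of `v` in the dominator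
tree, then every simple path in `G` from `w` to any descendant of `v` contains `(u,v)`. -/
theorem stmt1 (G : V → V → Prop) (hG : StronglyConnected G) (s u v : V)
    (hbr : IsBridge G s u v)
    (w : V) (hw : ¬ Dom G s v w)
    (z : V) (hz : Dom G s v z)
    (p : List V) (hwalk : IsWalk G w z p) (hsimple : p.Nodup) :
    EdgeOn u v p := by
  exact stmt1' G s u v hbr w hw z hz p hwalk hsimple

end StrongConn
end

section
/- Let G be a strongly connected digraph, s a start vertex, and e=(u,v) a strong bridge of G that is a bridge of the flow graph G_s (so u=d(v)). For any vertex w in D(v) (the set of descendants of v in the dominator tree D), all vertices of H(w) (the descendants of w in the loop nesting tree H of G_s) lie in one strongly connected component C of G\e, and moreover C ⊆ D(v). -/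
namespace StrongConn

variable {V : Type*}

section Aux

variable {G : V → V → Prop} {s u v a b c : V}

lemma mem_of_getLast?' : ∀ {l : List V} {a : V}, l.getLast? = some a → a ∈ l := by
  intro l
  induction l with
  | nil => intro a h; simp at h
  | cons x t ih =>
    intro a h
    cases t with
    | nil => simp_all
    | cons y t' =>
      rw [List.getLast?_cons_cons] at h
      exact List.mem_cons_of_mem _ (ih h)

lemma pair_fst_mem {l : List V} (h : (a, b) ∈ l.zip l.tail) : a ∈ l :=
  (List.of_mem_zip h).1

lemma pair_snd_mem {l : List V} (h : (a, b) ∈ l.zip l.tail) : b ∈ l :=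
  List.mem_of_mem_tail (List.of_mem_zip h).2

lemma zip_cons_cons {x y : V} {t : List V} :
    (x :: y :: t).zip (x :: y :: t).tail = (x, y) :: ((y :: t).zip (y :: t).tail) := rfl

lemma chain'_pair {R : V → V → Prop} :
    ∀ {l : List V}, List.Chain' R l → (a, b) ∈ l.zip l.tail → R a b := by
  intro l
  induction l with
  | nil => intro _ h; simp at h
  | cons x t ih =>
    intro hc h
    cases t with
    | nil => simp at h
    | cons y t' =>
      rw [zip_cons_cons] at h
      rcases List.mem_cons.mp h with h | h
      · simp only [Prod.mk.injEq] at h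
        obtain ⟨rfl, rfl⟩ := h
        exact (List.isChain_cons_cons.mp hc).1
      · exact ih (List.isChain_cons_cons.mp hc).2 h

lemma chain'_and {R S : V → V → Prop} :
    ∀ {l : List V}, List.Chain' R l → (∀ e ∈ l.zip l.tail, S e.1 e.2) →
      List.Chain' (fun x y => R x y ∧ S x y) l := by
  intro l
  induction l with
  | nil => intro _ _; exact List.isChain_nil
  | cons x t ih =>
    intro hc hs
    cases t with
    | nil => exact List.isChain_singleton x
    | cons y t' =>
      rw [zip_cons_cons] at hs
      refine List.isChain_cons_cons.mpr ⟨⟨(List.isChain_cons_cons.mp hc).1, hs (x, y) (List.mem_cons_self)⟩, ?_⟩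
      exact ih (List.isChain_cons_cons.mp hc).2 (fun e he => hs e (List.mem_cons_of_mem _ he))

lemma isWalk_single : IsWalk G a a [a] := ⟨List.isChain_singleton a, rfl, rfl⟩

lemma IsWalk.mono {G' : V → V → Prop} (hle : ∀ x y, G x y → G' x y) {p : List V}
    (h : IsWalk G a b p) : IsWalk G' a b p :=
  ⟨h.1.imp (fun _ _ hxy => hle _ _ hxy), h.2.1, h.2.2⟩

lemma isWalk_cons {r : List V} {y : V} (hG : G a y) (h : IsWalk G y c r) :
    IsWalk G a c (a :: r) := by
  obtain ⟨hc, hh, hl⟩ := h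
  refine ⟨List.isChain_cons.mpr ⟨?_, hc⟩, rfl, ?_⟩
  · intro z hz
    rw [hh] at hz
    cases hz
    exact hG
  · cases r with
    | nil => simp at hh
    | cons z t => rw [List.getLast?_cons_cons]; exact hl

lemma zip_cons_of_head {r : List V} {y : V} (hh : r.head? = some y) :
    (a :: r).zip (a :: r).tail = (a, y) :: r.zip r.tail := by
  cases r with
  | nil => simp at hh
  | cons z t =>
    obtain rfl : z = y := by simpa using hh
    rfl

lemma isWalk_append {q : List V} (hq : IsWalk G b c q) :
    ∀ (p : List V) (a : V), IsWalk G a b p →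
      ∃ r, IsWalk G a c r ∧ (∀ x ∈ r, x ∈ p ∨ x ∈ q) ∧
        ∀ e ∈ r.zip r.tail, e ∈ p.zip p.tail ∨ e ∈ q.zip q.tail := by
  intro p
  induction p with
  | nil => intro a h; simp [IsWalk] at h
  | cons x t ih =>
    intro a h
    obtain ⟨hc, hh, hl⟩ := h
    rw [List.head?_cons] at hh
    obtain rfl : a = x := (Option.some.inj hh).symm
    cases t with
    | nil =>
      obtain rfl : b = a := by simpa using hl.symm
      exact ⟨q, hq, fun z hz => Or.inr hz, fun e he => Or.inr he⟩
    | cons y t' =>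
      have hw : IsWalk G y b (y :: t') :=
        ⟨hc.tail, rfl, by rw [← List.getLast?_cons_cons (a := a)]; exact hl⟩
      obtain ⟨r, hr, hmem, hpairs⟩ := ih y hw
      have hxy : G a y := (List.isChain_cons_cons.mp hc).1
      refine ⟨a :: r, isWalk_cons hxy hr, ?_, ?_⟩
      · intro z hz
        rcases List.mem_cons.mp hz with rfl | hz
        · exact Or.inl (List.mem_cons_self)
        · rcases hmem z hz with h' | h'
          · exact Or.inl (List.mem_cons_of_mem _ h')
          · exact Or.inr h'
      · intro e he
        rw [zip_cons_of_head hr.2.1] at he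
        rw [zip_cons_cons]
        rcases List.mem_cons.mp he with rfl | he
        · exact Or.inl (List.mem_cons_self)
        · rcases hpairs e he with h' | h'
          · exact Or.inl (List.mem_cons_of_mem _ h')
          · exact Or.inr h'

lemma isWalk_prefix (v : V) :
    ∀ (p : List V) (a b : V), IsWalk G a b p → v ∈ p →
      ∃ r, IsWalk G a v r ∧ (∀ x ∈ r, x ∈ p) ∧ (∀ e ∈ r.zip r.tail, e ∈ p.zip p.tail) ∧
        r.length ≤ p.length ∧ (v ≠ b → r.length < p.length) := by
  intro p
  induction p with
  | nil => intro a b h _; simp [IsWalk] at h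
  | cons x t ih =>
    intro a b h hv
    obtain ⟨hc, hh, hl⟩ := h
    rw [List.head?_cons] at hh
    obtain rfl : a = x := (Option.some.inj hh).symm
    by_cases hva : v = a
    · subst hva
      refine ⟨[v], isWalk_single, by simp, by simp, by simp, ?_⟩
      intro hne
      cases t with
      | nil => exact absurd (by simpa using hl) hne
      | cons y t' => simp
    · have hvt : v ∈ t := by
        rcases List.mem_cons.mp hv with h' | h'
        · exact absurd h' hva
        · exact h'
      cases t with
      | nil => simp at hvt
      | cons y t' =>
        have hw : IsWalk G y b (y :: t') :=
          ⟨hc.tail, rfl, by rw [← List.getLast?_cons_cons (a := a)]; exact hl⟩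
        obtain ⟨r, hr, hmem, hpairs, hlen, hlt⟩ := ih y b hw hvt
        have hxy : G a y := (List.isChain_cons_cons.mp hc).1
        refine ⟨a :: r, isWalk_cons hxy hr, ?_, ?_, by simpa using hlen, ?_⟩
        · intro z hz
          rcases List.mem_cons.mp hz with rfl | hz
          · exact List.mem_cons_self
          · exact List.mem_cons_of_mem _ (hmem z hz)
        · intro e he
          rw [zip_cons_of_head hr.2.1] at he
          rw [zip_cons_cons]
          rcases List.mem_cons.mp he with rfl | he
          · exact List.mem_cons_self
          · exact List.mem_cons_of_mem _ (hpairs e he)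
        · intro hne
          simpa using hlt hne

lemma isWalk_delLoop (c : V) :
    ∀ (p : List V) (a b : V), IsWalk G a b p → ∃ r, IsWalk (DelEdge G c c) a b r := by
  intro p
  induction p with
  | nil => intro a b h; simp [IsWalk] at h
  | cons x t ih =>
    intro a b h
    obtain ⟨hc, hh, hl⟩ := h
    rw [List.head?_cons] at hh
    obtain rfl : a = x := (Option.some.inj hh).symm
    cases t with
    | nil =>
      obtain rfl : b = a := by simpa using hl.symm
      exact ⟨[b], isWalk_single⟩
    | cons y t' =>
      have hw : IsWalk G y b (y :: t') :=
        ⟨hc.tail, rfl, by rw [← List.getLast?_cons_cons (a := a)]; exact hl⟩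
      obtain ⟨r, hr⟩ := ih y b hw
      by_cases hay : a = y
      · exact ⟨r, hay ▸ hr⟩
      · have hxy : G a y := (List.isChain_cons_cons.mp hc).1
        exact ⟨a :: r, isWalk_cons ⟨hxy, fun hp => hay (hp.1.trans hp.2.symm)⟩ hr⟩

lemma reach_refl : Reach G a a := ⟨[a], isWalk_single⟩

lemma reach_trans (h1 : Reach G a b) (h2 : Reach G b c) : Reach G a c := by
  obtain ⟨p, hpw⟩ := h1
  obtain ⟨q, hqw⟩ := h2
  obtain ⟨r, hr, -, -⟩ := isWalk_append hqw p a hpw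
  exact ⟨r, hr⟩

lemma sconn_refl : SConn G a a := ⟨reach_refl, reach_refl⟩

lemma sconn_symm (h : SConn G a b) : SConn G b a := ⟨h.2, h.1⟩

lemma sconn_trans (h1 : SConn G a b) (h2 : SConn G b c) : SConn G a c :=
  ⟨reach_trans h1.1 h2.1, reach_trans h2.2 h1.2⟩

lemma delEdge_le : ∀ x y, DelEdge G u v x y → G x y := fun _ _ h => h.1

lemma isWalk_delEdge_of_pairs {p : List V} (h : IsWalk G a b p)
    (hpr : ∀ e ∈ p.zip p.tail, ¬(e.1 = u ∧ e.2 = v)) : IsWalk (DelEdge G u v) a b p :=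
  ⟨chain'_and h.1 hpr, h.2.1, h.2.2⟩

lemma delEdge_pair_ne {p : List V} (h : IsWalk (DelEdge G u v) a b p) :
    ∀ e ∈ p.zip p.tail, ¬(e.1 = u ∧ e.2 = v) := by
  intro e he
  exact (chain'_pair (a := e.1) (b := e.2) h.1 he).2

lemma dom_self : Dom G s a a := fun _ hp => mem_of_getLast?' hp.2.2

lemma dom_trans {m z : V} (h1 : Dom G s u m) (h2 : Dom G s m z) : Dom G s u z := by
  intro p hpw
  obtain ⟨r, hr, hmem, -, -, -⟩ := isWalk_prefix m p s z hpw (h2 p hpw)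
  exact hmem u (h1 r hr)

lemma dom_antisymm (hreach : Reach G s b) (h1 : Dom G s a b) (h2 : Dom G s b a) :
    a = b := by
  classical
  by_contra hne
  obtain ⟨p0, hp0⟩ := hreach
  have hex : ∃ n, ∃ p : List V, IsWalk G s b p ∧ p.length = n := ⟨p0.length, p0, hp0, rfl⟩
  obtain ⟨p, hpw, hplen⟩ := Nat.find_spec hex
  obtain ⟨r, hrw, -, -, -, hlt⟩ := isWalk_prefix a p s b hpw (h1 p hpw)
  have hr : r.length < Nat.find hex := hplen ▸ hlt hne
  obtain ⟨r', hr'w, -, -, hle, -⟩ := isWalk_prefix b r s a hrw (h2 r hrw)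
  exact Nat.find_min hex (lt_of_le_of_lt hle hr) ⟨r', hr'w, rfl⟩

lemma dom_of_bridge (hbr : IsBridge G s u v) : Dom G s u v :=
  fun p hpw => pair_fst_mem (hbr.2 p hpw)

lemma bridge_head_ne_s (hbr : IsBridge G s u v) : v ≠ s := by
  intro h
  subst h
  have := hbr.2 [v] isWalk_single
  simp [EdgeOn] at this

lemma dom_ne_s (hvs : v ≠ s) (h : Dom G s v c) : c ≠ s := by
  intro hcs
  subst hcs
  have := h [c] isWalk_single
  simp at this
  exact hvs this

lemma strong_bridge_ne (hsb : IsStrongBridge G u v) : u ≠ v := by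
  intro h
  subst h
  obtain ⟨-, x, y, hxy, hnxy⟩ := hsb
  refine hnxy ⟨?_, ?_⟩
  · obtain ⟨p, hpw⟩ := hxy.1
    exact isWalk_delLoop u p x y hpw
  · obtain ⟨p, hpw⟩ := hxy.2
    exact isWalk_delLoop u p y x hpw

lemma dom_of_reach_del {x y : V} (hbr : IsBridge G s u v) (hy : Dom G s v y)
    (hxy : Reach (DelEdge G u v) x y) : Dom G s v x := by
  intro p hpw
  by_contra hvp
  obtain ⟨q, hq⟩ := hxy
  have hqG : IsWalk G x y q := hq.mono delEdge_le
  obtain ⟨r, hrw, hmem, -⟩ := isWalk_append hqG p s hpw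
  have hvq : v ∈ q := ((hmem v (hy r hrw)).resolve_left hvp)
  obtain ⟨q', hq'w, -, hq'pairs, -, -⟩ := isWalk_prefix v q x y hqG hvq
  obtain ⟨r', hr'w, -, hr'pairs⟩ := isWalk_append hq'w p s hpw
  rcases hr'pairs (u, v) (hbr.2 r' hr'w) with h' | h'
  · exact hvp (pair_snd_mem h')
  · exact delEdge_pair_ne hq (u, v) (hq'pairs _ h') ⟨rfl, rfl⟩

variable {T : DFSTree G s}

lemma anc_trans {x y z : V} (h1 : T.Anc x y) (h2 : T.Anc y z) : T.Anc x z := by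
  obtain ⟨n, hn⟩ := h1
  obtain ⟨m, hm⟩ := h2
  exact ⟨n + m, by rw [Function.iterate_add_apply, hm, hn]⟩

lemma pre_anc_lt : ∀ (n : ℕ) (x : V), T.parent^[n] x ≠ x → T.pre (T.parent^[n] x) < T.pre x := by
  intro n
  induction n with
  | zero => intro x h; simp at h
  | succ n ih =>
    intro x h
    rw [Function.iterate_succ_apply'] at h ⊢
    by_cases hz : T.parent^[n] x = x
    · rw [hz] at h ⊢
      have hxs : x ≠ s := fun hs => h (by rw [hs, T.parent_root])
      exact T.pre_parent x hxs
    · have h1 := ih x hz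
      by_cases hpz : T.parent (T.parent^[n] x) = T.parent^[n] x
      · rw [hpz]; exact h1
      · have hzs : T.parent^[n] x ≠ s := fun hs => hpz (by rw [hs, T.parent_root])
        exact lt_trans (T.pre_parent _ hzs) h1

lemma anc_antisymm {x y : V} (h1 : T.Anc x y) (h2 : T.Anc y x) : x = y := by
  by_contra hne
  obtain ⟨n, hn⟩ := h1
  obtain ⟨m, hm⟩ := h2
  have l1 := pre_anc_lt n y (hn ▸ hne)
  have l2 := pre_anc_lt m x (hm ▸ Ne.symm hne)
  rw [hn] at l1
  rw [hm] at l2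
  omega

lemma tree_walk : ∀ (n : ℕ) (x : V), ∃ p, IsWalk G (T.parent^[n] x) x p ∧
    (∀ y ∈ p, T.Anc y x) ∧
    ∀ e ∈ p.zip p.tail, T.Anc (T.parent^[n] x) e.2 ∧ e.2 ≠ T.parent^[n] x := by
  intro n
  induction n with
  | zero =>
    intro x
    refine ⟨[x], isWalk_single, ?_, by simp⟩
    intro y hy
    rcases List.mem_cons.mp hy with rfl | hy
    · exact ⟨0, rfl⟩
    · simp at hy
  | succ n ih =>
    intro x
    obtain ⟨p, hpw, hmem, hpairs⟩ := ih x
    rw [Function.iterate_succ_apply']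
    by_cases h : T.parent (T.parent^[n] x) = T.parent^[n] x
    · rw [h]; exact ⟨p, hpw, hmem, hpairs⟩
    · have hys : T.parent^[n] x ≠ s := fun hs => h (by rw [hs, T.parent_root])
      have hedge : G (T.parent (T.parent^[n] x)) (T.parent^[n] x) := T.parent_edge _ hys
      refine ⟨T.parent (T.parent^[n] x) :: p, isWalk_cons hedge hpw, ?_, ?_⟩
      · intro z hz
        rcases List.mem_cons.mp hz with rfl | hz
        · exact ⟨n + 1, by rw [Function.iterate_succ_apply']⟩
        · exact hmem z hz
      · intro e he
        rw [zip_cons_of_head hpw.2.1] at he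
        have hanc1 : T.Anc (T.parent (T.parent^[n] x)) (T.parent^[n] x) := ⟨1, by simp⟩
        rcases List.mem_cons.mp he with rfl | he
        · exact ⟨hanc1, Ne.symm h⟩
        · obtain ⟨ha, hb⟩ := hpairs e he
          refine ⟨anc_trans hanc1 ha, ?_⟩
          intro hc
          exact hb (anc_antisymm ha (hc ▸ hanc1)).symm

lemma anc_of_dom {z : V} (T : DFSTree G s) (h : Dom G s a z) : T.Anc a z := by
  obtain ⟨n, hn⟩ := T.root_reach z
  obtain ⟨p, hpw, hmem, -⟩ := tree_walk (T := T) n z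
  rw [hn] at hpw
  exact hmem a (h p hpw)

end Aux

lemma hanc_sconn (G : V → V → Prop) (hG : StronglyConnected G) (s u v : V)
    (hsb : IsStrongBridge G u v) (hbr : IsBridge G s u v)
    (T : DFSTree G s) (hp : V → V) (hlp : IsLoopParent G s T.Anc hp)
    (w : V) (hw : Dom G s v w) :
    ∀ (n : ℕ) (x : V), hp^[n] x = w → SConn (DelEdge G u v) w x := by
  have huv : u ≠ v := strong_bridge_ne hsb
  have hDomuv : Dom G s u v := dom_of_bridge hbr
  intro n
  induction n with
  | zero =>
    intro x hn
    obtain rfl : x = w := hn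
    exact sconn_refl
  | succ n ih =>
    intro x hn
    by_cases hxs : x = s
    · rw [hxs] at hn ⊢
      have hws : w = s := by rw [← hn, Function.iterate_fixed hlp.1]
      rw [hws]
      exact sconn_refl
    · have hn' : hp^[n] (hp x) = w := by
        rw [← Function.iterate_succ_apply]; exact hn
      have hyC : SConn (DelEdge G u v) w (hp x) := ih (hp x) hn'
      have hDomvy : Dom G s v (hp x) := dom_of_reach_del hbr hw hyC.2
      obtain ⟨hanc, hne, ⟨-, p, hpwalk, hpdesc⟩, -⟩ := hlp.2 x hxs
      have hreach1 : Reach (DelEdge G u v) x (hp x) := by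
        refine ⟨p, isWalk_delEdge_of_pairs hpwalk ?_⟩
        rintro ⟨e1, e2⟩ hep ⟨rfl, rfl⟩
        have hup : e1 ∈ p := pair_fst_mem hep
        have hancU : T.Anc (hp x) e1 := hpdesc e1 hup
        have hDomUy : Dom G s e1 (hp x) := dom_trans hDomuv hDomvy
        have hUy : e1 = hp x := anc_antisymm (anc_of_dom T hDomUy) hancU
        exact huv (dom_antisymm (hG s e2) hDomuv (hUy ▸ hDomvy))
      have hreach2 : Reach (DelEdge G u v) (hp x) x := by
        obtain ⟨m, hm⟩ := hanc
        obtain ⟨q, hq, -, hqpairs⟩ := tree_walk (T := T) m x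
        rw [hm] at hq hqpairs
        refine ⟨q, isWalk_delEdge_of_pairs hq ?_⟩
        rintro ⟨e1, e2⟩ heq ⟨rfl, rfl⟩
        obtain ⟨hancv, hnev⟩ := hqpairs (e1, e2) heq
        exact hnev (anc_antisymm (anc_of_dom T hDomvy) hancv)
      exact sconn_trans hyC ⟨hreach2, hreach1⟩

/-- For a strong bridge `(u,v)` that is a bridge of `G_s` and any `w ∈ D(v)`, the set
`H(w)` is contained in a strongly connected component `C` of `G \ e` with `C ⊆ D(v)`. -/
theorem stmt3 (G : V → V → Prop) (hG : StronglyConnected G) (s u v : V)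
    (hsb : IsStrongBridge G u v) (hbr : IsBridge G s u v)
    (T : DFSTree G s) (hp : V → V) (hlp : IsLoopParent G s T.Anc hp)
    (w : V) (hw : Dom G s v w) :
    ∃ C : Set V, IsSCC (DelEdge G u v) C ∧ {x | HAnc hp w x} ⊆ C ∧
      C ⊆ {x | Dom G s v x} := by
  refine ⟨{y | SConn (DelEdge G u v) w y}, ⟨⟨w, sconn_refl⟩, ?_, ?_⟩, ?_, ?_⟩
  · intro x hx y hy
    exact sconn_trans (sconn_symm hx) hy
  · intro x hx y hxy
    exact sconn_trans hx hxy
  · rintro x ⟨n, hn⟩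
    exact hanc_sconn G hG s u v hsb hbr T hp hlp w hw n x hn
  · intro x hx
    exact dom_of_reach_del hbr hw hx.2

end StrongConn
end

section
/- Let G be a strongly connected digraph with start vertex s, and suppose a strong bridge e separates vertices x and y (i.e., x and y are in different strongly connected components of G\e). Then e appears in at least one of the four dominator-tree paths: D[s,x], D[s,y], D^R[s,x], D^R[s,y]. -/
namespace StrongConn

variable {V : Type*}

private lemma reach_iff_rtg (G : V → V → Prop) (a b : V) :
    Reach G a b ↔ Relation.ReflTransGen G a b := by
  constructor
  · rintro ⟨p, hc, hh, hl⟩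
    induction p generalizing a with
    | nil => simp at hh
    | cons c t ih =>
      simp only [List.head?_cons, Option.some.injEq] at hh
      subst hh
      cases t with
      | nil =>
        simp only [List.getLast?_singleton, Option.some.injEq] at hl
        subst hl; exact .refl
      | cons d t' =>
        unfold List.Chain' at hc
        rw [List.isChain_cons_cons] at hc
        exact .head hc.1 (ih _ hc.2 rfl (by simpa [List.getLast?_cons_cons] using hl))
  · intro h
    induction h using Relation.ReflTransGen.head_induction_on with
    | refl => exact ⟨[b], by simp [IsWalk, List.Chain', List.isChain_singleton]⟩
    | head hab _ ih =>
      obtain ⟨p, hc, hh, hl⟩ := ih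
      cases p with
      | nil => simp at hh
      | cons c t =>
        simp only [List.head?_cons, Option.some.injEq] at hh
        subst hh
        exact ⟨_ :: _ :: t, List.isChain_cons_cons.2 ⟨hab, hc⟩, rfl,
          by simpa [List.getLast?_cons_cons] using hl⟩

private lemma split_lemma {G : V → V → Prop} {u v x y : V}
    (h : Relation.ReflTransGen G x y) :
    Relation.ReflTransGen (DelEdge G u v) x y ∨
      (Relation.ReflTransGen (DelEdge G u v) x u ∧
        Relation.ReflTransGen (DelEdge G u v) v y) := by
  induction h using Relation.ReflTransGen.head_induction_on with
  | refl => exact Or.inl .refl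
  | @head a c hac _ ih =>
    by_cases h' : a = u ∧ c = v
    · obtain ⟨rfl, rfl⟩ := h'
      refine Or.inr ⟨.refl, ?_⟩
      rcases ih with h1 | ⟨_, h2⟩
      · exact h1
      · exact h2
    · have hstep : DelEdge G u v a c := ⟨hac, h'⟩
      rcases ih with h1 | ⟨h1, h2⟩
      · exact Or.inl (.head hstep h1)
      · exact Or.inr ⟨.head hstep h1, h2⟩

private lemma chain'_mono_mem {G H : V → V → Prop} :
    ∀ {p : List V}, (∀ a b, a ∈ p → b ∈ p → G a b → H a b) → p.Chain' G → p.Chain' H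
  | [], _, _ => List.isChain_nil
  | [_], _, _ => List.isChain_singleton _
  | a :: b :: t, himp, hc => by
    unfold List.Chain' at hc ⊢
    rw [List.isChain_cons_cons] at hc ⊢
    exact ⟨himp a b (by simp) (by simp) hc.1,
      chain'_mono_mem
        (fun x y hx hy => himp x y (List.mem_cons_of_mem _ hx) (List.mem_cons_of_mem _ hy))
        hc.2⟩

private lemma edgeOn_cons_cons {a b c d : V} {t : List V} :
    EdgeOn a b (c :: d :: t) ↔ (a = c ∧ b = d) ∨ EdgeOn a b (d :: t) := by
  simp [EdgeOn, List.zip, Prod.ext_iff]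

private lemma chain'_delEdge {G : V → V → Prop} {u v : V} :
    ∀ {p : List V}, p.Chain' G → ¬ EdgeOn u v p → p.Chain' (DelEdge G u v)
  | [], _, _ => List.isChain_nil
  | [_], _, _ => List.isChain_singleton _
  | a :: b :: t, hc, he => by
    unfold List.Chain' at hc ⊢
    rw [List.isChain_cons_cons] at hc ⊢
    rw [edgeOn_cons_cons] at he
    push_neg at he
    refine ⟨⟨hc.1, fun h => he.1 h.1.symm h.2.symm⟩, chain'_delEdge hc.2 he.2⟩

private lemma rtg_rev {G : V → V → Prop} {a b : V}
    (h : Relation.ReflTransGen (Rev G) a b) : Relation.ReflTransGen G b a := by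
  induction h with
  | refl => exact .refl
  | tail _ hcd ih => exact .head hcd ih

private lemma main_aux (G : V → V → Prop) (hG : StronglyConnected G) (s u v x y : V)
    (huv : G u v) (hxy : ¬ Reach (DelEdge G u v) x y) :
    (IsBridge G s u v ∧ Dom G s v y) ∨ (IsBridge (Rev G) s v u ∧ Dom (Rev G) s u x) := by
  set G' := DelEdge G u v with hG'def
  have hxy' : ¬ Relation.ReflTransGen G' x y := fun h => hxy ((reach_iff_rtg G' x y).2 h)
  obtain ⟨F1, F2⟩ :=
    (split_lemma (u := u) (v := v) ((reach_iff_rtg G x y).1 (hG x y))).resolve_left hxy'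
  -- from a `G'`-connection x → s we get the left disjunct
  have key : Relation.ReflTransGen G' x s → IsBridge G s u v ∧ Dom G s v y := by
    intro hxs
    constructor
    · refine ⟨huv, fun p hp => ?_⟩
      by_contra hnE
      have hsv : Relation.ReflTransGen G' s v :=
        (reach_iff_rtg G' s v).1 ⟨p, chain'_delEdge hp.1 hnE, hp.2.1, hp.2.2⟩
      exact hxy' (hxs.trans (hsv.trans F2))
    · intro p hp
      by_contra hv
      have hsy : Relation.ReflTransGen G' s y :=
        (reach_iff_rtg G' s y).1
          ⟨p, chain'_mono_mem
              (fun a b _ hb hab => ⟨hab, fun h => by rcases h with ⟨_, rfl⟩; exact hv hb⟩)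
              hp.1, hp.2.1, hp.2.2⟩
      exact hxy' (hxs.trans hsy)
  by_cases hB : IsBridge (Rev G) s v u
  · by_cases hDx : Dom (Rev G) s u x
    · exact Or.inr ⟨hB, hDx⟩
    · -- walk s → x in Rev G avoiding u, hence avoiding the deleted edge
      rw [Dom] at hDx
      push_neg at hDx
      obtain ⟨p, hp, hu⟩ := hDx
      have hc : p.Chain' (Rev G') :=
        chain'_mono_mem
          (fun a b _ hb hab =>
            ⟨hab, fun h => by rcases h with ⟨rfl, _⟩; exact hu hb⟩)
          hp.1
      have hxs : Relation.ReflTransGen G' x s :=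
        rtg_rev ((reach_iff_rtg (Rev G') s x).1 ⟨p, hc, hp.2.1, hp.2.2⟩)
      exact Or.inl (key hxs)
  · -- not a bridge of the reverse flow graph: walk s → u in Rev G avoiding the edge
    rw [IsBridge] at hB
    push_neg at hB
    obtain ⟨p, hp, hnE⟩ := hB huv
    have hc : p.Chain' (DelEdge (Rev G) v u) := chain'_delEdge hp.1 hnE
    have hc' : p.Chain' (Rev G') :=
      chain'_mono_mem (fun a b _ _ hab => ⟨hab.1, fun h => hab.2 ⟨h.2, h.1⟩⟩) hc
    have hus : Relation.ReflTransGen G' u s :=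
      rtg_rev ((reach_iff_rtg (Rev G') s u).1 ⟨p, hc', hp.2.1, hp.2.2⟩)
    exact Or.inl (key (F1.trans hus))

/-- If a strong bridge `(u,v)` separates `x` and `y`, then it lies on one of the
dominator-tree paths `D[s,x]`, `D[s,y]`, `D^R[s,x]`, `D^R[s,y]`. -/
theorem stmt10 (G : V → V → Prop) (hG : StronglyConnected G) (s u v x y : V)
    (hsb : IsStrongBridge G u v)
    (hsep : ¬ SConn (DelEdge G u v) x y) :
    (IsBridge G s u v ∧ (Dom G s v x ∨ Dom G s v y)) ∨
      (IsBridge (Rev G) s v u ∧ (Dom (Rev G) s u x ∨ Dom (Rev G) s u y)) := by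
  obtain ⟨huv, -⟩ := hsb
  rcases not_and_or.1 hsep with h | h
  · rcases main_aux G hG s u v x y huv h with ⟨hb, hd⟩ | ⟨hb, hd⟩
    · exact Or.inl ⟨hb, Or.inr hd⟩
    · exact Or.inr ⟨hb, Or.inl hd⟩
  · rcases main_aux G hG s u v y x huv h with ⟨hb, hd⟩ | ⟨hb, hd⟩
    · exact Or.inl ⟨hb, Or.inl hd⟩
    · exact Or.inr ⟨hb, Or.inr hd⟩

end StrongConn
end
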